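/- Let c > 1/2 and δ > 0 be fixed, and for k ≥ 1 set a_k = 2^k · Σ_{P ∈ 𝒫(k)} 2^{−#P} · δ^{#P − 2kc} · ∏_{B ∈ P} 1/(2c·#B − 1). Then there exists a constant M > 0 (depending only on c and δ) such that a_{k+1} ≤ M·(k+1)·a_k for all k ≥ 1; consequently the power series Σ_{k≥1} (a_k/k!)·t^k has a positive (or infinite) radius of convergence. -/

import Mathlib

/-- A finite collection `Q` of subsets of `{1,…,k}` is a set partition of `{1,…,k}` if its
blocks are nonempty and every element lies in exactly one block. -/
def IsSetPartition {k : ℕ} (Q : Finset (Finset (Fin k))) : Prop :=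
  (∀ B ∈ Q, B.Nonempty) ∧ ∀ x : Fin k, ∃! B, B ∈ Q ∧ x ∈ B

open scoped Classical in
/-- The moment `a_k = 2^k ∑_{P ∈ 𝒫(k)} 2^{-#P} δ^{#P - 2kc} ∏_{B ∈ P} (2c·#B - 1)⁻¹` of the
truncated random Dirichlet series `T(c,δ)`. -/
noncomputable def truncMoment (c δ : ℝ) (k : ℕ) : ℝ :=
  2 ^ k * ∑ Q : Finset (Finset (Fin k)),
    if IsSetPartition Q then
      ((2 : ℝ) ^ Q.card)⁻¹ * δ ^ ((Q.card : ℝ) - 2 * k * c) *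
        ∏ B ∈ Q, 1 / (2 * c * (B.card : ℝ) - 1)
    else 0

open scoped Classical

namespace TM

noncomputable def wt (c δ : ℝ) (k : ℕ) (Q : Finset (Finset (Fin k))) : ℝ :=
  ((2 : ℝ) ^ Q.card)⁻¹ * δ ^ ((Q.card : ℝ) - 2 * k * c) *
        ∏ B ∈ Q, 1 / (2 * c * (B.card : ℝ) - 1)

lemma truncMoment_eq (c δ : ℝ) (k : ℕ) :
    truncMoment c δ k
      = 2 ^ k * ∑ Q ∈ Finset.univ.filter (fun Q => IsSetPartition Q), wt c δ k Q := by
  rw [truncMoment, Finset.sum_filter]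
  rfl

variable {k : ℕ}

/-- restriction of a block to `Fin k`. -/
def eblk (B : Finset (Fin (k + 1))) : Finset (Fin k) :=
  Finset.univ.filter (fun i => i.castSucc ∈ B)

@[simp] lemma mem_eblk {B : Finset (Fin (k + 1))} {i : Fin k} :
    i ∈ eblk B ↔ i.castSucc ∈ B := by simp [eblk]

/-- lift of a block of `Fin k`. -/
def lblk (A : Finset (Fin k)) : Finset (Fin (k + 1)) :=
  A.map Fin.castSuccEmb

@[simp] lemma mem_lblk {A : Finset (Fin k)} {x : Fin (k + 1)} :
    x ∈ lblk A ↔ ∃ i ∈ A, i.castSucc = x := by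
  simp only [lblk, Finset.mem_map, Fin.coe_castSuccEmb]

@[simp] lemma castSucc_mem_lblk {A : Finset (Fin k)} {i : Fin k} :
    i.castSucc ∈ lblk A ↔ i ∈ A := by
  rw [mem_lblk]
  constructor
  · rintro ⟨j, hj, h⟩; rwa [← (Fin.castSucc_injective k) h]
  · exact fun h => ⟨i, h, rfl⟩

@[simp] lemma last_not_mem_lblk {A : Finset (Fin k)} : Fin.last k ∉ lblk A := by
  rw [mem_lblk]
  rintro ⟨i, hi, h⟩
  exact (Fin.castSucc_lt_last i).ne h

@[simp] lemma eblk_lblk (A : Finset (Fin k)) : eblk (lblk A) = A := by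
  ext i; simp

@[simp] lemma card_lblk (A : Finset (Fin k)) : (lblk A).card = A.card := Finset.card_map _

lemma lblk_inj : Function.Injective (lblk (k := k)) := fun A A' h => by
  rw [← eblk_lblk A, h, eblk_lblk]

lemma lblk_eblk {B : Finset (Fin (k + 1))} (h : Fin.last k ∉ B) : lblk (eblk B) = B := by
  ext x
  rcases eq_or_ne x (Fin.last k) with rfl | hx
  · simp only [last_not_mem_lblk, false_iff]; exact h
  · obtain ⟨i, rfl⟩ := Fin.eq_castSucc_of_ne_last hx
    simp [castSucc_mem_lblk]

lemma eq_insert_last {B : Finset (Fin (k + 1))} (h : Fin.last k ∈ B) :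
    B = insert (Fin.last k) (lblk (eblk B)) := by
  ext x
  rcases eq_or_ne x (Fin.last k) with rfl | hx
  · simp [h]
  · obtain ⟨i, rfl⟩ := Fin.eq_castSucc_of_ne_last hx
    simp [(Fin.castSucc_lt_last i).ne]

lemma card_insert_last (A : Finset (Fin k)) :
    (insert (Fin.last k) (lblk A)).card = A.card + 1 := by
  rw [Finset.card_insert_of_notMem last_not_mem_lblk, card_lblk]

/-- restriction of a collection of blocks. -/
def rmap (P : Finset (Finset (Fin (k + 1)))) : Finset (Finset (Fin k)) :=
  (P.image eblk).erase ∅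

lemma mem_rmap {P : Finset (Finset (Fin (k + 1)))} {A : Finset (Fin k)} :
    A ∈ rmap P ↔ A ≠ ∅ ∧ ∃ B ∈ P, eblk B = A := by
  simp [rmap]

/-- the block containing `last`. -/
def blk0 (P : Finset (Finset (Fin (k + 1)))) : Finset (Fin (k + 1)) :=
  P.sup (fun B => if Fin.last k ∈ B then B else ∅)

section Partition

variable {P : Finset (Finset (Fin (k + 1)))} (hP : IsSetPartition P)
include hP

lemma block_eq {B B' : Finset (Fin (k + 1))} (hB : B ∈ P) (hB' : B' ∈ P)
    {x : Fin (k + 1)} (hx : x ∈ B) (hx' : x ∈ B') : B = B' := by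
  obtain ⟨C, -, hC⟩ := hP.2 x
  rw [hC B ⟨hB, hx⟩, hC B' ⟨hB', hx'⟩]

lemma blk0_spec : blk0 P ∈ P ∧ Fin.last k ∈ blk0 P := by
  obtain ⟨B, ⟨hBP, hBx⟩, -⟩ := hP.2 (Fin.last k)
  have : blk0 P = B := by
    apply le_antisymm
    · apply Finset.sup_le
      intro C hC
      by_cases h : Fin.last k ∈ C
      · rw [if_pos h, block_eq hP hC hBP h hBx]
      · simp [h]
    · have := Finset.le_sup (f := fun C => if Fin.last k ∈ C then C else ∅) hBP
      simp only [if_pos hBx] at this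
      exact this
  rw [this]; exact ⟨hBP, hBx⟩

lemma blk0_eq {B : Finset (Fin (k + 1))} (hB : B ∈ P) (hx : Fin.last k ∈ B) :
    blk0 P = B :=
  block_eq hP (blk0_spec hP).1 hB (blk0_spec hP).2 hx

lemma eblk_nonempty {B : Finset (Fin (k + 1))} (hB : B ∈ P)
    (hL : Fin.last k ∉ B) : (eblk B).Nonempty := by
  obtain ⟨x, hx⟩ := hP.1 B hB
  obtain ⟨i, rfl⟩ := Fin.eq_castSucc_of_ne_last
    (show x ≠ Fin.last k from fun h => hL (h ▸ hx))
  exact ⟨i, by simpa using hx⟩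

lemma eblk_mem_rmap {B : Finset (Fin (k + 1))} (hB : B ∈ P)
    (hL : Fin.last k ∉ B) : eblk B ∈ rmap P := by
  rw [mem_rmap]
  exact ⟨(eblk_nonempty hP hB hL).ne_empty, B, hB, rfl⟩

lemma rmap_partition : IsSetPartition (rmap P) := by
  constructor
  · intro A hA
    rw [mem_rmap] at hA
    exact Finset.nonempty_iff_ne_empty.2 hA.1
  · intro x
    obtain ⟨B, ⟨hBP, hBx⟩, hBu⟩ := hP.2 x.castSucc
    refine ⟨eblk B, ⟨?_, by simpa using hBx⟩, ?_⟩
    · rw [mem_rmap]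
      exact ⟨(Finset.nonempty_iff_ne_empty.1 ⟨x, by simpa using hBx⟩), B, hBP, rfl⟩
    · rintro A ⟨hA, hxA⟩
      rw [mem_rmap] at hA
      obtain ⟨-, B', hB', rfl⟩ := hA
      rw [hBu B' ⟨hB', by simpa using hxA⟩]

omit hP in
lemma card_le_of_partition {n : ℕ} {Q : Finset (Finset (Fin n))} (hQ : IsSetPartition Q) :
    Q.card ≤ n := by
  classical
  have hdisj : (Q : Set (Finset (Fin n))).PairwiseDisjoint id := by
    intro A hA B hB hne
    simp only [Function.onFun, id] at *
    rw [Finset.disjoint_left]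
    intro x hxA hxB
    obtain ⟨C, -, hC⟩ := hQ.2 x
    exact hne ((hC A ⟨hA, hxA⟩).trans (hC B ⟨hB, hxB⟩).symm)
  calc Q.card = ∑ A ∈ Q, 1 := by simp
    _ ≤ ∑ A ∈ Q, A.card := Finset.sum_le_sum fun A hA =>
        Finset.card_pos.2 (hQ.1 A hA)
    _ = (Q.biUnion id).card := (Finset.card_biUnion (fun A hA B hB h => hdisj hA hB h)).symm
    _ ≤ (Finset.univ : Finset (Fin n)).card := Finset.card_le_card (Finset.subset_univ _)
    _ = n := by simp

lemma not_eblk_eq_eblk_blk0 {B : Finset (Fin (k + 1))} (hB : B ∈ P)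
    (hL : Fin.last k ∉ B) (h : eblk B = eblk (blk0 P)) : False := by
  obtain ⟨i, hi⟩ := eblk_nonempty hP hB hL
  have hi2 : i ∈ eblk (blk0 P) := h ▸ hi
  have : B = blk0 P := block_eq hP hB (blk0_spec hP).1 (mem_eblk.1 hi) (mem_eblk.1 hi2)
  exact hL (this ▸ (blk0_spec hP).2)

lemma blk0_eq_singleton (h0 : eblk (blk0 P) = ∅) : blk0 P = {Fin.last k} := by
  have h := eq_insert_last (blk0_spec hP).2
  rw [h0] at h
  rw [h]
  simp [lblk]

lemma struct1 (h0 : eblk (blk0 P) = ∅) :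
    P = insert {Fin.last k} ((rmap P).image lblk) := by
  ext B
  constructor
  · intro hB
    by_cases hL : Fin.last k ∈ B
    · rw [← blk0_eq hP hB hL, blk0_eq_singleton hP h0]
      exact Finset.mem_insert_self _ _
    · refine Finset.mem_insert_of_mem (Finset.mem_image.2 ⟨eblk B, eblk_mem_rmap hP hB hL, ?_⟩)
      exact lblk_eblk hL
  · intro hB
    rcases Finset.mem_insert.1 hB with rfl | hB
    · have := (blk0_spec hP).1
      rwa [blk0_eq_singleton hP h0] at this
    · obtain ⟨A, hA, rfl⟩ := Finset.mem_image.1 hB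
      obtain ⟨hAne, B', hB', rfl⟩ := mem_rmap.1 hA
      have hL : Fin.last k ∉ B' := by
        intro hL
        rw [← blk0_eq hP hB' hL] at hAne
        exact hAne h0
      rwa [lblk_eblk hL]

omit hP in
lemma singleton_last_not_mem_image :
    ({Fin.last k} : Finset (Fin (k + 1))) ∉ (rmap P).image lblk := by
  intro h
  obtain ⟨A, -, hA⟩ := Finset.mem_image.1 h
  have : Fin.last k ∈ lblk A := hA ▸ Finset.mem_singleton_self _
  exact last_not_mem_lblk this

/-- the lifting map in case 2 -/
noncomputable def gmap (P : Finset (Finset (Fin (k + 1)))) (A : Finset (Fin k)) :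
    Finset (Fin (k + 1)) :=
  if A = eblk (blk0 P) then blk0 P else lblk A

lemma gmap_mem {A : Finset (Fin k)} (hA : A ∈ rmap P) : gmap P A ∈ P := by
  rw [gmap]
  split_ifs with h
  · exact (blk0_spec hP).1
  · obtain ⟨hAne, B, hB, rfl⟩ := mem_rmap.1 hA
    have hL : Fin.last k ∉ B := by
      intro hL
      exact h (by rw [blk0_eq hP hB hL])
    rwa [lblk_eblk hL]

lemma gmap_inj {A A' : Finset (Fin k)} (hA : A ∈ rmap P) (hA' : A' ∈ rmap P)
    (h : gmap P A = gmap P A') : A = A' := by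
  rw [gmap, gmap] at h
  split_ifs at h with h1 h2 h2
  · rw [h1, h2]
  · exact absurd ((blk0_spec hP).2) (by rw [h]; exact last_not_mem_lblk)
  · exact absurd ((blk0_spec hP).2) (by rw [← h]; exact last_not_mem_lblk)
  · exact lblk_inj h

lemma gmap_surj {B : Finset (Fin (k + 1))} (h0 : eblk (blk0 P) ≠ ∅) (hB : B ∈ P) :
    ∃ A ∈ rmap P, gmap P A = B := by
  by_cases hL : Fin.last k ∈ B
  · refine ⟨eblk (blk0 P), ?_, ?_⟩
    · exact mem_rmap.2 ⟨h0, blk0 P, (blk0_spec hP).1, rfl⟩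
    · rw [gmap, if_pos rfl, blk0_eq hP hB hL]
  · refine ⟨eblk B, eblk_mem_rmap hP hB hL, ?_⟩
    rw [gmap, if_neg (fun h => not_eblk_eq_eblk_blk0 hP hB hL h), lblk_eblk hL]

lemma card_gmap {A : Finset (Fin k)} :
    (gmap P A).card = (if A = eblk (blk0 P) then A.card + 1 else A.card) := by
  rw [gmap]
  split_ifs with h
  · conv_lhs => rw [eq_insert_last (blk0_spec hP).2]
    rw [card_insert_last, ← h]
  · exact card_lblk A

lemma card_eq_case2 (h0 : eblk (blk0 P) ≠ ∅) : P.card = (rmap P).card := by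
  symm
  apply Finset.card_bij (fun A _ => gmap P A) (fun A hA => gmap_mem hP hA)
    (fun A hA A' hA' h => gmap_inj hP hA hA' h)
    (fun B hB => by
      obtain ⟨A, hA, hgA⟩ := gmap_surj hP h0 hB
      exact ⟨A, hA, hgA⟩)

lemma prod_eq_case2 (h0 : eblk (blk0 P) ≠ ∅) (f : ℕ → ℝ) :
    ∏ A ∈ rmap P, f (gmap P A).card = ∏ B ∈ P, f B.card :=
  Finset.prod_bij (s := rmap P) (t := P) (f := fun A => f (gmap P A).card)
    (g := fun B => f B.card) (i := fun A _ => gmap P A)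
    (fun A hA => gmap_mem hP hA)
    (fun A hA A' hA' h => gmap_inj hP hA hA' h)
    (fun B hB => by
      obtain ⟨A, hA, hgA⟩ := gmap_surj hP h0 hB
      exact ⟨A, hA, hgA⟩)
    (fun A hA => rfl)

end Partition

noncomputable def C1 (c δ : ℝ) : ℝ := (2 : ℝ)⁻¹ * δ ^ ((1 : ℝ) - 2 * c) * (1 / (2 * c - 1))

noncomputable def C2 (c δ : ℝ) : ℝ := δ ^ (-(2 * c))

noncomputable def CC (c δ : ℝ) : ℝ := max (C1 c δ) (C2 c δ)

lemma CC_pos {c δ : ℝ} (hδ : 0 < δ) : 0 < CC c δ :=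
  lt_of_lt_of_le (Real.rpow_pos_of_pos hδ _) (le_max_right _ _)

lemma fb_pos {c : ℝ} (hc : 1 / 2 < c) {m : ℕ} (hm : 1 ≤ m) :
    0 < 1 / (2 * c * (m : ℝ) - 1) := by
  have h1 : (1 : ℝ) ≤ (m : ℝ) := by exact_mod_cast hm
  have : 0 < 2 * c * (m : ℝ) - 1 := by nlinarith
  positivity

lemma fb_succ_le {c : ℝ} (hc : 1 / 2 < c) {m : ℕ} (hm : 1 ≤ m) :
    1 / (2 * c * ((m + 1 : ℕ) : ℝ) - 1) ≤ 1 / (2 * c * (m : ℝ) - 1) := by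
  have h1 : (1 : ℝ) ≤ (m : ℝ) := by exact_mod_cast hm
  have h2 : 0 < 2 * c * (m : ℝ) - 1 := by nlinarith
  apply one_div_le_one_div_of_le h2
  push_cast
  nlinarith

lemma prod_fb_nonneg {c : ℝ} (hc : 1 / 2 < c) {n : ℕ} {Q : Finset (Finset (Fin n))}
    (hQ : ∀ B ∈ Q, B.Nonempty) :
    0 ≤ ∏ B ∈ Q, 1 / (2 * c * (B.card : ℝ) - 1) :=
  Finset.prod_nonneg fun B hB => (fb_pos hc (Finset.card_pos.2 (hQ B hB))).le

lemma wt_nonneg {c δ : ℝ} (hc : 1 / 2 < c) (hδ : 0 < δ) {n : ℕ}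
    {Q : Finset (Finset (Fin n))} (hQ : ∀ B ∈ Q, B.Nonempty) :
    0 ≤ wt c δ n Q := by
  rw [wt]
  have h1 : (0 : ℝ) ≤ ((2 : ℝ) ^ Q.card)⁻¹ := by positivity
  have h2 : (0 : ℝ) ≤ δ ^ ((Q.card : ℝ) - 2 * n * c) := (Real.rpow_pos_of_pos hδ _).le
  exact mul_nonneg (mul_nonneg h1 h2) (prod_fb_nonneg hc hQ)

lemma wt_le {c δ : ℝ} (hc : 1 / 2 < c) (hδ : 0 < δ)
    {P : Finset (Finset (Fin (k + 1)))} (hP : IsSetPartition P) :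
    wt c δ (k + 1) P ≤ CC c δ * wt c δ k (rmap P) := by
  have hQ : IsSetPartition (rmap P) := rmap_partition hP
  have hQnn : 0 ≤ wt c δ k (rmap P) := wt_nonneg hc hδ hQ.1
  by_cases h0 : eblk (blk0 P) = ∅
  · -- case 1 : the block of `last` is a singleton
    have hcard : P.card = (rmap P).card + 1 := by
      conv_lhs => rw [struct1 hP h0]
      rw [Finset.card_insert_of_notMem singleton_last_not_mem_image,
        Finset.card_image_of_injective _ lblk_inj]
    have hprod : ∏ B ∈ P, 1 / (2 * c * (B.card : ℝ) - 1)
        = (1 / (2 * c - 1)) * ∏ A ∈ rmap P, 1 / (2 * c * (A.card : ℝ) - 1) := by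
      conv_lhs => rw [struct1 hP h0]
      rw [Finset.prod_insert singleton_last_not_mem_image,
        Finset.prod_image (fun A _ A' _ h => lblk_inj h)]
      simp [card_lblk, mul_one]
    have hwt : wt c δ (k + 1) P = wt c δ k (rmap P) * C1 c δ := by
      rw [wt, wt, hcard, hprod]
      have hexp : (((rmap P).card + 1 : ℕ) : ℝ) - 2 * ((k : ℕ) + 1 : ℕ) * c
          = (((rmap P).card : ℕ) : ℝ) - 2 * (k : ℝ) * c + ((1 : ℝ) - 2 * c) := by
        push_cast; ring
      rw [show (((k : ℕ) + 1 : ℕ) : ℝ) = (k : ℝ) + 1 by push_cast; ring] at *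
      have hexp' : (((rmap P).card + 1 : ℕ) : ℝ) - 2 * ((k : ℝ) + 1) * c
          = ((((rmap P).card : ℕ) : ℝ) - 2 * (k : ℝ) * c) + ((1 : ℝ) - 2 * c) := by
        push_cast; ring
      rw [hexp', Real.rpow_add hδ, pow_succ, C1]
      ring
    rw [hwt]
    calc wt c δ k (rmap P) * C1 c δ ≤ wt c δ k (rmap P) * CC c δ :=
          mul_le_mul_of_nonneg_left (le_max_left _ _) hQnn
      _ = CC c δ * wt c δ k (rmap P) := mul_comm _ _
  · -- case 2 : the block of `last` has other elements
    have hcard : P.card = (rmap P).card := card_eq_case2 hP h0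
    have hprod : ∏ B ∈ P, 1 / (2 * c * (B.card : ℝ) - 1)
        ≤ ∏ A ∈ rmap P, 1 / (2 * c * (A.card : ℝ) - 1) := by
      rw [← prod_eq_case2 hP h0 (fun m => 1 / (2 * c * (m : ℝ) - 1))]
      apply Finset.prod_le_prod
      · intro A hA
        have : (gmap P A).Nonempty := hP.1 _ (gmap_mem hP hA)
        exact (fb_pos hc (Finset.card_pos.2 this)).le
      · intro A hA
        rw [card_gmap hP]
        split_ifs with h
        · exact fb_succ_le hc (Finset.card_pos.2 (hQ.1 A hA))
        · exact le_refl _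
    have hexp : ((((rmap P).card : ℕ) : ℝ)) - 2 * (((k : ℕ) + 1 : ℕ) : ℝ) * c
        = ((((rmap P).card : ℕ) : ℝ) - 2 * (k : ℝ) * c) + (-(2 * c)) := by
      push_cast; ring
    have key : wt c δ (k + 1) P
        ≤ wt c δ k (rmap P) * C2 c δ := by
      rw [wt, wt, hcard, hexp, Real.rpow_add hδ, C2]
      have hpre : (0 : ℝ) ≤ ((2 : ℝ) ^ (rmap P).card)⁻¹ *
          (δ ^ ((((rmap P).card : ℕ) : ℝ) - 2 * (k : ℝ) * c) * δ ^ (-(2 * c))) := by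
        have := (Real.rpow_pos_of_pos hδ ((((rmap P).card : ℕ) : ℝ) - 2 * (k : ℝ) * c)).le
        have := (Real.rpow_pos_of_pos hδ (-(2 * c))).le
        positivity
      calc ((2 : ℝ) ^ (rmap P).card)⁻¹ *
            (δ ^ ((((rmap P).card : ℕ) : ℝ) - 2 * (k : ℝ) * c) * δ ^ (-(2 * c))) *
            ∏ B ∈ P, 1 / (2 * c * (B.card : ℝ) - 1)
          ≤ ((2 : ℝ) ^ (rmap P).card)⁻¹ *
            (δ ^ ((((rmap P).card : ℕ) : ℝ) - 2 * (k : ℝ) * c) * δ ^ (-(2 * c))) *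
            ∏ A ∈ rmap P, 1 / (2 * c * (A.card : ℝ) - 1) :=
            mul_le_mul_of_nonneg_left hprod hpre
        _ = ((2 : ℝ) ^ (rmap P).card)⁻¹ * δ ^ ((((rmap P).card : ℕ) : ℝ) - 2 * (k : ℝ) * c) *
            (∏ A ∈ rmap P, 1 / (2 * c * (A.card : ℝ) - 1)) * δ ^ (-(2 * c)) := by ring
    calc wt c δ (k + 1) P ≤ wt c δ k (rmap P) * C2 c δ := key
      _ ≤ wt c δ k (rmap P) * CC c δ := mul_le_mul_of_nonneg_left (le_max_right _ _) hQnn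
      _ = CC c δ * wt c δ k (rmap P) := mul_comm _ _

lemma partition_determined {P P' : Finset (Finset (Fin (k + 1)))}
    (hP : IsSetPartition P) (hP' : IsSetPartition P') (hr : rmap P = rmap P')
    (he : eblk (blk0 P) = eblk (blk0 P')) : P = P' := by
  have key : ∀ (P P' : Finset (Finset (Fin (k + 1)))), IsSetPartition P → IsSetPartition P' →
      rmap P = rmap P' → eblk (blk0 P) = eblk (blk0 P') → P ⊆ P' := by
    intro P P' hP hP' hr he B hB
    by_cases hL : Fin.last k ∈ B
    · have hB0 : blk0 P = B := blk0_eq hP hB hL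
      have h1 : B = insert (Fin.last k) (lblk (eblk B)) := eq_insert_last hL
      have h2 : blk0 P' = insert (Fin.last k) (lblk (eblk (blk0 P'))) :=
        eq_insert_last (blk0_spec hP').2
      have : B = blk0 P' := by rw [h1, h2, ← he, hB0]
      rw [this]; exact (blk0_spec hP').1
    · have hA : eblk B ∈ rmap P := eblk_mem_rmap hP hB hL
      rw [hr] at hA
      obtain ⟨hne, B', hB', hEB'⟩ := mem_rmap.1 hA
      by_cases hL' : Fin.last k ∈ B'
      · exfalso
        have heq : eblk B = eblk (blk0 P) := by
          rw [← hEB', ← blk0_eq hP' hB' hL']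
          exact he.symm
        exact not_eblk_eq_eblk_blk0 hP hB hL heq
      · have : B = B' := by rw [← lblk_eblk hL, ← lblk_eblk hL', hEB']
        rw [this]; exact hB'
  exact subset_antisymm (key P P' hP hP' hr he) (key P' P hP' hP hr.symm he.symm)

lemma fiber_card_le {Q : Finset (Finset (Fin k))} (hQ : IsSetPartition Q) :
    (((Finset.univ : Finset (Finset (Finset (Fin (k + 1))))).filter
        (fun P => IsSetPartition P)).filter (fun P => rmap P = Q)).card ≤ k + 1 := by
  have h1 : (((Finset.univ : Finset (Finset (Finset (Fin (k + 1))))).filter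
        (fun P => IsSetPartition P)).filter (fun P => rmap P = Q)).card
      ≤ (insert ∅ Q).card := by
    apply Finset.card_le_card_of_injOn (fun P => eblk (blk0 P))
    · intro P hPm
      simp only [Finset.mem_coe, Finset.mem_filter, Finset.mem_univ, true_and] at hPm ⊢
      obtain ⟨hP, hrP⟩ := hPm
      by_cases h0 : eblk (blk0 P) = ∅
      · rw [h0]; exact Finset.mem_insert_self _ _
      · apply Finset.mem_insert_of_mem
        rw [← hrP]
        exact mem_rmap.2 ⟨h0, blk0 P, (blk0_spec hP).1, rfl⟩
    · intro P hPm P' hPm' h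
      simp only [Finset.coe_filter, Finset.mem_filter, Finset.mem_univ, true_and,
        Set.mem_setOf_eq] at hPm hPm'
      exact partition_determined hPm.1 hPm'.1 (hPm.2.trans hPm'.2.symm) h
  calc _ ≤ (insert ∅ Q).card := h1
    _ ≤ Q.card + 1 := Finset.card_insert_le _ _
    _ ≤ k + 1 := by
        have := card_le_of_partition hQ
        omega

lemma sum_le {c δ : ℝ} (hc : 1 / 2 < c) (hδ : 0 < δ) (k : ℕ) :
    ∑ P ∈ (Finset.univ : Finset (Finset (Finset (Fin (k + 1))))).filter
        (fun P => IsSetPartition P), wt c δ (k + 1) P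
      ≤ ((k : ℝ) + 1) * CC c δ *
        ∑ Q ∈ (Finset.univ : Finset (Finset (Finset (Fin k)))).filter
          (fun Q => IsSetPartition Q), wt c δ k Q := by
  rw [← Finset.sum_fiberwise_of_maps_to (g := rmap)
      (t := (Finset.univ : Finset (Finset (Finset (Fin k)))).filter (fun Q => IsSetPartition Q))
      (fun P hPm => by
        simp only [Finset.mem_filter, Finset.mem_univ, true_and] at hPm ⊢
        exact rmap_partition hPm) (wt c δ (k + 1))]
  rw [Finset.mul_sum]
  apply Finset.sum_le_sum
  intro Q hQm
  simp only [Finset.mem_filter, Finset.mem_univ, true_and] at hQm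
  have hwQ : 0 ≤ CC c δ * wt c δ k Q :=
    mul_nonneg (CC_pos hδ).le (wt_nonneg hc hδ hQm.1)
  have hterm : ∀ P ∈ ((Finset.univ : Finset (Finset (Finset (Fin (k + 1))))).filter
        (fun P => IsSetPartition P)).filter (fun P => rmap P = Q),
      wt c δ (k + 1) P ≤ CC c δ * wt c δ k Q := by
    intro P hPm
    simp only [Finset.mem_filter, Finset.mem_univ, true_and] at hPm
    have := wt_le hc hδ hPm.1
    rwa [hPm.2] at this
  calc ∑ P ∈ ((Finset.univ : Finset (Finset (Finset (Fin (k + 1))))).filter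
        (fun P => IsSetPartition P)).filter (fun P => rmap P = Q), wt c δ (k + 1) P
      ≤ (((Finset.univ : Finset (Finset (Finset (Fin (k + 1))))).filter
        (fun P => IsSetPartition P)).filter (fun P => rmap P = Q)).card •
          (CC c δ * wt c δ k Q) := Finset.sum_le_card_nsmul _ _ _ hterm
    _ ≤ (k + 1) • (CC c δ * wt c δ k Q) :=
        nsmul_le_nsmul_left hwQ (fiber_card_le hQm)
    _ = ((k : ℝ) + 1) * (CC c δ * wt c δ k Q) := by
        rw [nsmul_eq_mul]; push_cast; ring
    _ = ((k : ℝ) + 1) * CC c δ * wt c δ k Q := by ring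

lemma sum_nonneg' {c δ : ℝ} (hc : 1 / 2 < c) (hδ : 0 < δ) (k : ℕ) :
    0 ≤ ∑ Q ∈ (Finset.univ : Finset (Finset (Finset (Fin k)))).filter
        (fun Q => IsSetPartition Q), wt c δ k Q :=
  Finset.sum_nonneg fun Q hQm => by
    simp only [Finset.mem_filter, Finset.mem_univ, true_and] at hQm
    exact wt_nonneg hc hδ hQm.1

lemma truncMoment_nonneg {c δ : ℝ} (hc : 1 / 2 < c) (hδ : 0 < δ) (k : ℕ) :
    0 ≤ truncMoment c δ k := by
  rw [truncMoment_eq]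
  exact mul_nonneg (by positivity) (sum_nonneg' hc hδ k)

lemma ratio_bound {c δ : ℝ} (hc : 1 / 2 < c) (hδ : 0 < δ) (k : ℕ) :
    truncMoment c δ (k + 1) ≤ (2 * CC c δ) * ((k : ℝ) + 1) * truncMoment c δ k := by
  rw [truncMoment_eq, truncMoment_eq]
  calc (2 : ℝ) ^ (k + 1) * ∑ P ∈ (Finset.univ : Finset (Finset (Finset (Fin (k + 1))))).filter
        (fun P => IsSetPartition P), wt c δ (k + 1) P
      ≤ (2 : ℝ) ^ (k + 1) * (((k : ℝ) + 1) * CC c δ *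
          ∑ Q ∈ (Finset.univ : Finset (Finset (Finset (Fin k)))).filter
            (fun Q => IsSetPartition Q), wt c δ k Q) :=
        mul_le_mul_of_nonneg_left (sum_le hc hδ k) (by positivity)
    _ = (2 * CC c δ) * ((k : ℝ) + 1) * ((2 : ℝ) ^ k *
          ∑ Q ∈ (Finset.univ : Finset (Finset (Finset (Fin k)))).filter
            (fun Q => IsSetPartition Q), wt c δ k Q) := by
        rw [pow_succ]; ring

end TM



/-- there is a constant `M > 0` (depending only on `c` and `δ`) with
`a_{k+1} ≤ M (k+1) a_k` for all `k ≥ 1`; consequently the exponential generating series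
`∑ (a_k / k!) t^k` has a positive (or infinite) radius of convergence. -/
theorem truncated_moment_ratio_bound
    (c δ : ℝ) (hc : 1 / 2 < c) (hδ : 0 < δ) :
    (∃ M : ℝ, 0 < M ∧ ∀ k : ℕ, 1 ≤ k →
      truncMoment c δ (k + 1) ≤ M * (k + 1) * truncMoment c δ k) ∧
    (∃ t : ℝ, 0 < t ∧
      Summable fun k : ℕ => truncMoment c δ k / (Nat.factorial k : ℝ) * t ^ k) := by
  set M : ℝ := 2 * TM.CC c δ with hMdef
  have hMpos : 0 < M := by
    have := TM.CC_pos (c := c) hδ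
    simp only [hMdef]
    linarith
  have hratio : ∀ k : ℕ, truncMoment c δ (k + 1) ≤ M * ((k : ℝ) + 1) * truncMoment c δ k :=
    fun k => TM.ratio_bound hc hδ k
  have hnn : ∀ k, 0 ≤ truncMoment c δ k := TM.truncMoment_nonneg hc hδ
  refine ⟨⟨M, hMpos, fun k _ => hratio k⟩, ?_⟩
  -- part 2
  set M₁ : ℝ := max M 1 with hM₁def
  have hM₁1 : (1 : ℝ) ≤ M₁ := le_max_right _ _
  have hM₁pos : (0 : ℝ) < M₁ := lt_of_lt_of_le one_pos hM₁1
  set t : ℝ := (2 * M₁)⁻¹ with htdef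
  have htpos : 0 < t := by positivity
  have hMt : M₁ * t = 1 / 2 := by
    rw [htdef]
    field_simp
  have hgrow : ∀ n : ℕ, truncMoment c δ (n + 1)
      ≤ (Nat.factorial (n + 1) : ℝ) * (truncMoment c δ 1 * M₁ ^ n) := by
    intro n
    induction n with
    | zero => simp
    | succ n ih =>
      have h1 : truncMoment c δ (n + 2) ≤ M * ((n : ℝ) + 1 + 1) * truncMoment c δ (n + 1) := by
        have h := hratio (n + 1)
        push_cast at h
        exact h
      have h2 : M * ((n : ℝ) + 1 + 1) * truncMoment c δ (n + 1)
          ≤ M₁ * ((n : ℝ) + 1 + 1) * truncMoment c δ (n + 1) := by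
        apply mul_le_mul_of_nonneg_right _ (hnn (n + 1))
        exact mul_le_mul_of_nonneg_right (le_max_left _ _) (by positivity)
      have h3 : M₁ * ((n : ℝ) + 1 + 1) * truncMoment c δ (n + 1)
          ≤ M₁ * ((n : ℝ) + 1 + 1) * ((Nat.factorial (n + 1) : ℝ) *
            (truncMoment c δ 1 * M₁ ^ n)) := by
        apply mul_le_mul_of_nonneg_left ih
        positivity
      have h4 : M₁ * ((n : ℝ) + 1 + 1) * ((Nat.factorial (n + 1) : ℝ) *
            (truncMoment c δ 1 * M₁ ^ n))
          = (Nat.factorial (n + 2) : ℝ) * (truncMoment c δ 1 * M₁ ^ (n + 1)) := by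
        have hfac : ((Nat.factorial (n + 2) : ℕ) : ℝ)
            = ((n : ℝ) + 2) * (Nat.factorial (n + 1) : ℝ) := by
          rw [show n + 2 = (n + 1) + 1 from rfl, Nat.factorial_succ]
          push_cast
          ring
        rw [hfac]
        ring
      calc truncMoment c δ (n + 2) ≤ M * ((n : ℝ) + 1 + 1) * truncMoment c δ (n + 1) := h1
        _ ≤ M₁ * ((n : ℝ) + 1 + 1) * truncMoment c δ (n + 1) := h2
        _ ≤ M₁ * ((n : ℝ) + 1 + 1) * ((Nat.factorial (n + 1) : ℝ) *
            (truncMoment c δ 1 * M₁ ^ n)) := h3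
        _ = (Nat.factorial (n + 2) : ℝ) * (truncMoment c δ 1 * M₁ ^ (n + 1)) := h4
  set A : ℝ := max (truncMoment c δ 0) (2 * truncMoment c δ 1 * t) with hAdef
  have hbound : ∀ k : ℕ, truncMoment c δ k / (Nat.factorial k : ℝ) * t ^ k
      ≤ A * (1 / 2 : ℝ) ^ k := by
    intro k
    match k with
    | 0 =>
      simp only [pow_zero, Nat.factorial_zero, Nat.cast_one, div_one, mul_one]
      exact le_max_left _ _
    | n + 1 =>
      have hfacpos : (0 : ℝ) < (Nat.factorial (n + 1) : ℝ) := by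
        exact_mod_cast Nat.factorial_pos _
      have hdiv : truncMoment c δ (n + 1) / (Nat.factorial (n + 1) : ℝ)
          ≤ truncMoment c δ 1 * M₁ ^ n := by
        rw [div_le_iff₀ hfacpos]
        calc truncMoment c δ (n + 1)
            ≤ (Nat.factorial (n + 1) : ℝ) * (truncMoment c δ 1 * M₁ ^ n) := hgrow n
          _ = truncMoment c δ 1 * M₁ ^ n * (Nat.factorial (n + 1) : ℝ) := by ring
      have h5 : truncMoment c δ (n + 1) / (Nat.factorial (n + 1) : ℝ) * t ^ (n + 1)
          ≤ truncMoment c δ 1 * M₁ ^ n * t ^ (n + 1) :=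
        mul_le_mul_of_nonneg_right hdiv (by positivity)
      have h6 : truncMoment c δ 1 * M₁ ^ n * t ^ (n + 1)
          = (2 * truncMoment c δ 1 * t) * (1 / 2 : ℝ) ^ (n + 1) := by
        have hpow : (1 / 2 : ℝ) ^ n = M₁ ^ n * t ^ n := by rw [← mul_pow, hMt]
        rw [pow_succ t n, pow_succ (1 / 2 : ℝ) n, hpow]
        ring
      have h7 : (2 * truncMoment c δ 1 * t) * (1 / 2 : ℝ) ^ (n + 1)
          ≤ A * (1 / 2 : ℝ) ^ (n + 1) :=
        mul_le_mul_of_nonneg_right (le_max_right _ _) (by positivity)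
      calc truncMoment c δ (n + 1) / (Nat.factorial (n + 1) : ℝ) * t ^ (n + 1)
          ≤ truncMoment c δ 1 * M₁ ^ n * t ^ (n + 1) := h5
        _ = (2 * truncMoment c δ 1 * t) * (1 / 2 : ℝ) ^ (n + 1) := h6
        _ ≤ A * (1 / 2 : ℝ) ^ (n + 1) := h7
  refine ⟨t, htpos, ?_⟩
  have hfnn : ∀ k : ℕ, 0 ≤ truncMoment c δ k / (Nat.factorial k : ℝ) * t ^ k := by
    intro k
    have := hnn k
    have hfac : (0 : ℝ) < (Nat.factorial k : ℝ) := by exact_mod_cast Nat.factorial_pos _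
    positivity
  have hg : Summable fun k : ℕ => A * (1 / 2 : ℝ) ^ k :=
    (summable_geometric_of_lt_one (by norm_num) (by norm_num)).mul_left A
  exact Summable.of_nonneg_of_le hfnn hbound hg
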